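/- Let A be a symmetric N×N complex matrix (Aᵀ = A), let U be a symmetric unitary N×N complex matrix (Uᵀ = U, U·conj(U) = I_N), and let a₀ ∈ ℂ^N with |a₀| < 1. Let M₁ be the (N+1)×(N+1) block matrix with top-left block −A·U, top-right column a₀, bottom-left row −a₀ᵀ·U, and bottom-right entry 1; let M₂ be the (N+1)×(N+1) block matrix with top-left block −(A·U)ᴴ = −Ū·Ā, top-right column Ū·ā₀, bottom-left row −ā₀ᵀ, and bottom-right entry 1, where Ā, Ū, ā₀ denote entrywise conjugates and ᴴ the conjugate transpose. Then there exists k ∈ ℂ with k ≠ 0 and M₁·M₂ = k·(M₂·M₁) if and only if Ū·Ā·A·U − (Ū·ā₀)·(a₀ᵀ·U) = A·Ā − a₀·ā₀ᵀ and Ū·Ā·a₀ − Ū·ā₀ = A·ā₀ − a₀, where a₀·ā₀ᵀ is the N×N matrix with (i,j) entry (a₀)_i·conj((a₀)_j) and (Ū·ā₀)·(a₀ᵀ·U) is the N×N product of the column Ū·ā₀ with the row a₀ᵀ·U. -/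

import Mathlib

open ComplexConjugate

/-- The matrix associated with the linear fractional map
`φ(z) = (a₀ − AUz)/(1 − ⟨Uz, ā₀⟩)`: block matrix with top-left `−A·U`,
top-right column `a₀`, bottom-left row `−a₀ᵀ·U`, bottom-right entry `1`. -/
noncomputable def M1 (N : ℕ) (A U : Matrix (Fin N) (Fin N) ℂ) (a₀ : Fin N → ℂ) :
    Matrix (Fin N ⊕ Unit) (Fin N ⊕ Unit) ℂ :=
  Matrix.fromBlocks (-(A * U)) (Matrix.of fun i (_ : Unit) => a₀ i)
    (Matrix.of fun (_ : Unit) j => -(Matrix.vecMul a₀ U j))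
    (Matrix.of fun (_ : Unit) (_ : Unit) => (1 : ℂ))

/-- The matrix associated with the adjoint map
`σ(z) = (−(AU)ᴴ z + Ū·ā₀)/(1 − ⟨z, a₀⟩)`: block matrix with top-left `−(A·U)ᴴ`,
top-right column `Ū·ā₀`, bottom-left row `−ā₀ᵀ`, bottom-right entry `1`. -/
noncomputable def M2 (N : ℕ) (A U : Matrix (Fin N) (Fin N) ℂ) (a₀ : Fin N → ℂ) :
    Matrix (Fin N ⊕ Unit) (Fin N ⊕ Unit) ℂ :=
  Matrix.fromBlocks (-(A * U).conjTranspose)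
    (Matrix.of fun i (_ : Unit) => (U.map (starRingEnd ℂ)).mulVec (star a₀) i)
    (Matrix.of fun (_ : Unit) j => -(starRingEnd ℂ (a₀ j)))
    (Matrix.of fun (_ : Unit) (_ : Unit) => (1 : ℂ))

theorem stmt_16 (N : ℕ) (A U : Matrix (Fin N) (Fin N) ℂ)
    (hA : A.transpose = A) (hUsymm : U.transpose = U)
    (hUunit : U * U.map (starRingEnd ℂ) = 1)
    (a₀ : Fin N → ℂ) (ha₀ : Real.sqrt (∑ j, ‖a₀ j‖ ^ 2) < 1) :
    (∃ k : ℂ, k ≠ 0 ∧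
        M1 N A U a₀ * M2 N A U a₀ = k • (M2 N A U a₀ * M1 N A U a₀)) ↔
      (U.map (starRingEnd ℂ) * A.map (starRingEnd ℂ) * A * U -
            Matrix.vecMulVec ((U.map (starRingEnd ℂ)).mulVec (star a₀))
              (Matrix.vecMul a₀ U) =
          A * A.map (starRingEnd ℂ) - Matrix.vecMulVec a₀ (star a₀) ∧
        (U.map (starRingEnd ℂ) * A.map (starRingEnd ℂ)).mulVec a₀ -
            (U.map (starRingEnd ℂ)).mulVec (star a₀) =
          A.mulVec (star a₀) - a₀) := by
  classical
  set Ac := A.map (starRingEnd ℂ) with hAc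
  set Uc := U.map (starRingEnd ℂ) with hUc
  set a := a₀
  set sa := star a₀ with hsa
  -- basic facts
  have hUcU : Uc * U = 1 := mul_eq_one_comm.mp hUunit
  have hAH : A.conjTranspose = Ac := by
    rw [Matrix.conjTranspose, hA]; rfl
  have hUH : U.conjTranspose = Uc := by
    rw [Matrix.conjTranspose, hUsymm]; rfl
  have hAcT : Ac.transpose = Ac := by
    rw [hAc, ← Matrix.transpose_map, hA]
  have hUcT : Uc.transpose = Uc := by
    rw [hUc, ← Matrix.transpose_map, hUsymm]
  have hAUH : (A * U).conjTranspose = Uc * Ac := by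
    rw [Matrix.conjTranspose_mul, hAH, hUH]
  -- rewrite the corner blocks
  have hone : (Matrix.of fun (_ : Unit) (_ : Unit) => (1 : ℂ)) = (1 : Matrix Unit Unit ℂ) := by
    ext i j
    simp [Matrix.one_apply]
  have hcol1 : (Matrix.of fun i (_ : Unit) => a i) = Matrix.replicateCol Unit a := rfl
  have hrow1 : (Matrix.of fun (_ : Unit) j => -(Matrix.vecMul a U j)) =
      -(Matrix.replicateRow Unit (Matrix.vecMul a U)) := rfl
  have hcol2 : (Matrix.of fun i (_ : Unit) => Uc.mulVec sa i) = Matrix.replicateCol Unit (Uc.mulVec sa) := rfl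
  have hrow2 : (Matrix.of fun (_ : Unit) j => -(starRingEnd ℂ (a j))) =
      -(Matrix.replicateRow Unit sa) := rfl
  have hM1 : M1 N A U a₀ = Matrix.fromBlocks (-(A * U)) (Matrix.replicateCol Unit a)
      (-(Matrix.replicateRow Unit (Matrix.vecMul a U))) (1 : Matrix Unit Unit ℂ) := by
    rw [M1, hone, hcol1, hrow1]
  have hM2 : M2 N A U a₀ = Matrix.fromBlocks (-(Uc * Ac)) (Matrix.replicateCol Unit (Uc.mulVec sa))
      (-(Matrix.replicateRow Unit sa)) (1 : Matrix Unit Unit ℂ) := by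
    rw [M2, hone, hcol2, hrow2, hAUH]
  -- the two products
  have hP : M1 N A U a₀ * M2 N A U a₀ =
      Matrix.fromBlocks (A * Ac - Matrix.vecMulVec a sa)
        (Matrix.replicateCol Unit (a - A.mulVec sa))
        (Matrix.replicateRow Unit (Matrix.vecMul a Ac - sa))
        (Matrix.of fun _ _ => 1 - dotProduct a sa) := by
    rw [hM1, hM2, Matrix.fromBlocks_multiply, Matrix.fromBlocks_inj]
    refine ⟨?_, ?_, ?_, ?_⟩
    · rw [Matrix.neg_mul, Matrix.mul_neg, neg_neg, ← Matrix.mul_assoc, Matrix.mul_assoc A U Uc,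
        hUunit, Matrix.mul_one, Matrix.mul_neg, ← Matrix.vecMulVec_eq Unit, sub_eq_add_neg]
    · rw [Matrix.mul_one, Matrix.neg_mul, ← Matrix.replicateCol_mulVec, Matrix.mulVec_mulVec,
        Matrix.mul_assoc A U Uc, hUunit, Matrix.mul_one]
      ext i j
      simp [Matrix.replicateCol_apply]
      ring
    · rw [Matrix.neg_mul, Matrix.mul_neg, neg_neg, ← Matrix.replicateRow_vecMul, Matrix.vecMul_vecMul,
        ← Matrix.mul_assoc, hUunit, Matrix.one_mul, Matrix.one_mul]
      ext i j
      simp [Matrix.replicateRow_apply]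
      ring
    · rw [Matrix.neg_mul, Matrix.replicateRow_mul_replicateCol, Matrix.dotProduct_mulVec, Matrix.vecMul_vecMul,
        hUunit, Matrix.vecMul_one, one_mul]
      ext i j
      simp [sub_eq_add_neg]
      ring
  
  have hQ : M2 N A U a₀ * M1 N A U a₀ =
      Matrix.fromBlocks (Uc * Ac * A * U - Matrix.vecMulVec (Uc.mulVec sa) (Matrix.vecMul a U))
        (Matrix.replicateCol Unit (Uc.mulVec sa - (Uc * Ac).mulVec a))
        (Matrix.replicateRow Unit (Matrix.vecMul sa (A * U) - Matrix.vecMul a U))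
        (Matrix.of fun _ _ => 1 - dotProduct a sa) := by
    rw [hM2, hM1, Matrix.fromBlocks_multiply, Matrix.fromBlocks_inj]
    refine ⟨?_, ?_, ?_, ?_⟩
    · rw [Matrix.neg_mul, Matrix.mul_neg, neg_neg, Matrix.mul_neg, ← Matrix.vecMulVec_eq Unit,
        ← Matrix.mul_assoc, sub_eq_add_neg]
    · rw [Matrix.mul_one, Matrix.neg_mul, ← Matrix.replicateCol_mulVec]
      ext i j
      simp [Matrix.replicateCol_apply]
      ring
    · rw [Matrix.neg_mul, Matrix.mul_neg, neg_neg, ← Matrix.replicateRow_vecMul, Matrix.one_mul]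
      ext i j
      simp [Matrix.replicateRow_apply]
      ring
    · rw [Matrix.neg_mul, Matrix.replicateRow_mul_replicateCol]
      ext i j
      simp [dotProduct_comm sa a, sub_eq_add_neg]
      ring
  -- the bottom-right entry is nonzero
  have hs0 : (0:ℝ) ≤ ∑ j, ‖a₀ j‖ ^ 2 := Finset.sum_nonneg fun j _ => sq_nonneg _
  have hs1 : (∑ j, ‖a₀ j‖ ^ 2) < 1 := by
    have := Real.sq_sqrt hs0
    nlinarith [Real.sqrt_nonneg (∑ j, ‖a₀ j‖ ^ 2)]
  have hd : dotProduct a sa = ((∑ j, ‖a₀ j‖ ^ 2 : ℝ) : ℂ) := by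
    simp [dotProduct, hsa, Complex.mul_conj', Complex.mul_conj]
    exact Finset.sum_congr rfl fun j _ => Complex.mul_conj' (a₀ j)
  have hne : (1 : ℂ) - dotProduct a sa ≠ 0 := by
    rw [hd, sub_ne_zero]
    intro h
    have : ((∑ j, ‖a₀ j‖ ^ 2 : ℝ) : ℂ) = ((1:ℝ) : ℂ) := by rw [← h]; norm_num
    exact absurd (Complex.ofReal_injective this) (by linarith)
  -- auxiliary fact converting the column condition
  have hAUT : (U * A).transpose = A * U := by rw [Matrix.transpose_mul, hA, hUsymm]
  constructor
  · rintro ⟨k, hk0, hk⟩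
    rw [hP, hQ] at hk
    have h22 := congrFun (congrFun hk (Sum.inr ())) (Sum.inr ())
    simp only [Matrix.fromBlocks_apply₂₂, Matrix.smul_apply, Matrix.of_apply,
      smul_eq_mul] at h22
    have hk1 : k = 1 := by
      have h' : (1 - dotProduct a sa) * k = (1 - dotProduct a sa) * 1 := by
        linear_combination -h22
      exact mul_left_cancel₀ hne h'
    subst hk1
    rw [one_smul, Matrix.fromBlocks_inj] at hk
    obtain ⟨h1, h2, h3, h4⟩ := hk
    have hv : a - A.mulVec sa = Uc.mulVec sa - (Uc * Ac).mulVec a :=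
      Matrix.replicateCol_injective h2
    refine ⟨h1.symm, ?_⟩
    rw [← neg_sub (Uc.mulVec sa) ((Uc * Ac).mulVec a), ← hv, neg_sub]
  · rintro ⟨h1, h2⟩
    refine ⟨1, one_ne_zero, ?_⟩
    rw [hP, hQ, one_smul, Matrix.fromBlocks_inj]
    have hv : a - A.mulVec sa = Uc.mulVec sa - (Uc * Ac).mulVec a := by
      rw [← neg_sub ((Uc * Ac).mulVec a) (Uc.mulVec sa), h2, neg_sub]
    have h5 : Ac.mulVec a - sa = (U * A).mulVec sa - U.mulVec a := by
      have := congrArg (fun v => U.mulVec v) h2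
      simp only [Matrix.mulVec_sub, Matrix.mulVec_mulVec] at this
      rwa [← Matrix.mul_assoc, hUunit, Matrix.one_mul, Matrix.one_mulVec] at this
    refine ⟨h1.symm, congrArg (Matrix.replicateCol Unit) hv, congrArg (Matrix.replicateRow Unit) ?_, rfl⟩
    rw [← hAcT, Matrix.vecMul_transpose, ← hAUT, Matrix.vecMul_transpose,
      ← hUsymm, Matrix.vecMul_transpose, hUsymm]
    exact h5
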